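/- Let γ₁, γ₂, γ₃, γ₄ : [t0,t1] → ℝ² be continuously differentiable curves, and suppose there exist C¹ functions x, y, a, b : [t0,t1] → ℝ with γ₁(t) = (x(t), y(t)), γ₂(t) = (x(t)+a(t), y(t)+b(t)), γ₃(t) = (x(t)+a(t)−b(t), y(t)+a(t)+b(t)), γ₄(t) = (x(t)−b(t), y(t)+a(t)) for all t. Then ∫_{γ₁} y dx − ∫_{γ₂} y dx + ∫_{γ₃} y dx − ∫_{γ₄} y dx = (a(t1)² − b(t1)²)/2 − (a(t0)² − b(t0)²)/2. -/

import Mathlib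

/-- Conserved integral of motion for squares: if `γ₁, γ₂, γ₃, γ₄` are C¹ curves on
`[t0,t1]` traversing the vertices of a continuously varying square with parameters
`x, y, a, b`, then the alternating sum of the areas `∫_{γᵢ} y dx` equals
`(a(t1)² − b(t1)²)/2 − (a(t0)² − b(t0)²)/2`. -/
theorem stmt1 (t0 t1 : ℝ) (ht : t0 ≤ t1)
    (γ₁ γ₂ γ₃ γ₄ : ℝ → ℝ × ℝ) (x y a b : ℝ → ℝ)
    (hγ₁ : ContDiffOn ℝ 1 γ₁ (Set.Icc t0 t1))
    (hγ₂ : ContDiffOn ℝ 1 γ₂ (Set.Icc t0 t1))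
    (hγ₃ : ContDiffOn ℝ 1 γ₃ (Set.Icc t0 t1))
    (hγ₄ : ContDiffOn ℝ 1 γ₄ (Set.Icc t0 t1))
    (hx : ContDiffOn ℝ 1 x (Set.Icc t0 t1))
    (hy : ContDiffOn ℝ 1 y (Set.Icc t0 t1))
    (ha : ContDiffOn ℝ 1 a (Set.Icc t0 t1))
    (hb : ContDiffOn ℝ 1 b (Set.Icc t0 t1))
    (h1 : ∀ t ∈ Set.Icc t0 t1, γ₁ t = (x t, y t))
    (h2 : ∀ t ∈ Set.Icc t0 t1, γ₂ t = (x t + a t, y t + b t))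
    (h3 : ∀ t ∈ Set.Icc t0 t1, γ₃ t = (x t + a t - b t, y t + a t + b t))
    (h4 : ∀ t ∈ Set.Icc t0 t1, γ₄ t = (x t - b t, y t + a t)) :
    (∫ t in t0..t1, (γ₁ t).2 * derivWithin (fun s => (γ₁ s).1) (Set.Icc t0 t1) t)
      - (∫ t in t0..t1, (γ₂ t).2 * derivWithin (fun s => (γ₂ s).1) (Set.Icc t0 t1) t)
      + (∫ t in t0..t1, (γ₃ t).2 * derivWithin (fun s => (γ₃ s).1) (Set.Icc t0 t1) t)
      - (∫ t in t0..t1, (γ₄ t).2 * derivWithin (fun s => (γ₄ s).1) (Set.Icc t0 t1) t)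
      = (a t1 ^ 2 - b t1 ^ 2) / 2 - (a t0 ^ 2 - b t0 ^ 2) / 2 := by
  rcases eq_or_lt_of_le ht with rfl | hlt
  · simp
  set I := Set.Icc t0 t1 with hI
  have hU : UniqueDiffOn ℝ I := uniqueDiffOn_Icc hlt
  set x' : ℝ → ℝ := derivWithin x I with hx'
  set a' : ℝ → ℝ := derivWithin a I with ha'
  set b' : ℝ → ℝ := derivWithin b I with hb'
  have hxd : DifferentiableOn ℝ x I := hx.differentiableOn one_ne_zero
  have had : DifferentiableOn ℝ a I := ha.differentiableOn one_ne_zero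
  have hbd : DifferentiableOn ℝ b I := hb.differentiableOn one_ne_zero
  have hyc : ContinuousOn y I := hy.continuousOn
  have hac : ContinuousOn a I := ha.continuousOn
  have hbc : ContinuousOn b I := hb.continuousOn
  have hx'c : ContinuousOn x' I := hx.continuousOn_derivWithin hU le_rfl
  have ha'c : ContinuousOn a' I := ha.continuousOn_derivWithin hU le_rfl
  have hb'c : ContinuousOn b' I := hb.continuousOn_derivWithin hU le_rfl
  have huIcc : Set.uIcc t0 t1 = I := Set.uIcc_of_le ht
  -- rewrite the four integrals
  have e1 : (∫ t in t0..t1, (γ₁ t).2 * derivWithin (fun s => (γ₁ s).1) I t)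
      = ∫ t in t0..t1, y t * x' t := by
    refine intervalIntegral.integral_congr fun t htI => ?_
    rw [huIcc] at htI
    have hd : derivWithin (fun s => (γ₁ s).1) I t = x' t := by
      exact derivWithin_congr (fun s hs => by rw [h1 s hs]) (by rw [h1 t htI])
    rw [hd, h1 t htI]
  have e2 : (∫ t in t0..t1, (γ₂ t).2 * derivWithin (fun s => (γ₂ s).1) I t)
      = ∫ t in t0..t1, (y t + b t) * (x' t + a' t) := by
    refine intervalIntegral.integral_congr fun t htI => ?_
    rw [huIcc] at htI
    have hd : derivWithin (fun s => (γ₂ s).1) I t = x' t + a' t := by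
      have : derivWithin (fun s => (γ₂ s).1) I t = derivWithin (fun s => x s + a s) I t :=
        derivWithin_congr (fun s hs => by rw [h2 s hs]) (by rw [h2 t htI])
      rw [this, derivWithin_fun_add (hxd t htI) (had t htI)]
    rw [hd, h2 t htI]
  have e3 : (∫ t in t0..t1, (γ₃ t).2 * derivWithin (fun s => (γ₃ s).1) I t)
      = ∫ t in t0..t1, (y t + a t + b t) * (x' t + a' t - b' t) := by
    refine intervalIntegral.integral_congr fun t htI => ?_
    rw [huIcc] at htI
    have hd : derivWithin (fun s => (γ₃ s).1) I t = x' t + a' t - b' t := by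
      have : derivWithin (fun s => (γ₃ s).1) I t = derivWithin (fun s => x s + a s - b s) I t :=
        derivWithin_congr (fun s hs => by rw [h3 s hs]) (by rw [h3 t htI])
      rw [this, derivWithin_fun_sub (f := fun s => x s + a s) ((hxd t htI).add (had t htI)) (hbd t htI),
        derivWithin_fun_add (hxd t htI) (had t htI)]
    rw [hd, h3 t htI]
  have e4 : (∫ t in t0..t1, (γ₄ t).2 * derivWithin (fun s => (γ₄ s).1) I t)
      = ∫ t in t0..t1, (y t + a t) * (x' t - b' t) := by
    refine intervalIntegral.integral_congr fun t htI => ?_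
    rw [huIcc] at htI
    have hd : derivWithin (fun s => (γ₄ s).1) I t = x' t - b' t := by
      have : derivWithin (fun s => (γ₄ s).1) I t = derivWithin (fun s => x s - b s) I t :=
        derivWithin_congr (fun s hs => by rw [h4 s hs]) (by rw [h4 t htI])
      rw [this, derivWithin_fun_sub (hxd t htI) (hbd t htI)]
    rw [hd, h4 t htI]
  rw [e1, e2, e3, e4]
  -- integrability
  have i1 : IntervalIntegrable (fun t => y t * x' t) MeasureTheory.volume t0 t1 :=
    (hyc.mul hx'c).intervalIntegrable_of_Icc ht
  have i2 : IntervalIntegrable (fun t => (y t + b t) * (x' t + a' t)) MeasureTheory.volume t0 t1 :=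
    ((hyc.add hbc).mul (hx'c.add ha'c)).intervalIntegrable_of_Icc ht
  have i3 : IntervalIntegrable (fun t => (y t + a t + b t) * (x' t + a' t - b' t))
      MeasureTheory.volume t0 t1 :=
    (((hyc.add hac).add hbc).mul ((hx'c.add ha'c).sub hb'c)).intervalIntegrable_of_Icc ht
  have i4 : IntervalIntegrable (fun t => (y t + a t) * (x' t - b' t))
      MeasureTheory.volume t0 t1 :=
    ((hyc.add hac).mul (hx'c.sub hb'c)).intervalIntegrable_of_Icc ht
  rw [← intervalIntegral.integral_sub i1 i2, ← intervalIntegral.integral_add (i1.sub i2) i3,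
    ← intervalIntegral.integral_sub ((i1.sub i2).add i3) i4]
  have key : (∫ t in t0..t1, (y t * x' t - (y t + b t) * (x' t + a' t)
      + (y t + a t + b t) * (x' t + a' t - b' t) - (y t + a t) * (x' t - b' t)))
      = ∫ t in t0..t1, (a t * a' t - b t * b' t) := by
    refine intervalIntegral.integral_congr fun t _ => ?_
    ring
  rw [key]
  have hF : ∀ t ∈ Set.Ioo t0 t1, HasDerivAt (fun s => (a s ^ 2 - b s ^ 2) / 2)
      (a t * a' t - b t * b' t) t := by
    intro t htI
    have htmem : t ∈ I := Set.mem_Icc_of_Ioo htI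
    have hIa : HasDerivAt a (a' t) t := by
      have := (had t htmem).hasDerivWithinAt
      exact this.hasDerivAt (Icc_mem_nhds htI.1 htI.2)
    have hIb : HasDerivAt b (b' t) t := by
      have := (hbd t htmem).hasDerivWithinAt
      exact this.hasDerivAt (Icc_mem_nhds htI.1 htI.2)
    have : HasDerivAt (fun s => (a s ^ 2 - b s ^ 2) / 2)
        ((2 * a t ^ 1 * a' t - 2 * b t ^ 1 * b' t) / 2) t :=
      (((hIa.pow 2).sub (hIb.pow 2)).div_const 2)
    convert this using 1
    ring
  have hcont : ContinuousOn (fun s => (a s ^ 2 - b s ^ 2) / 2) I :=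
    (((hac.pow 2).sub (hbc.pow 2)).div_const 2)
  have hint : IntervalIntegrable (fun t => a t * a' t - b t * b' t)
      MeasureTheory.volume t0 t1 :=
    ((hac.mul ha'c).sub (hbc.mul hb'c)).intervalIntegrable_of_Icc ht
  rw [intervalIntegral.integral_eq_sub_of_hasDeriv_right_of_le ht hcont
    (fun t htI => (hF t htI).hasDerivWithinAt) hint]
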